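/- Let c ≤ 0 be a real number and let x₀ < y₀. Then there is no function ζ : [x₀, y₀] → ℝ that is C¹ on [x₀, y₀] and C⁴ on (x₀, y₀), satisfies the ordinary differential equation ζ⁗(x) + c·ζ″(x) = 0 for all x ∈ (x₀, y₀), is strictly positive on (x₀, y₀), and satisfies ζ(x₀) = ζ(y₀) = 0 and ζ′(x₀) = ζ′(y₀) = 0. -/

import Mathlib

open Real Set Filter Topology

/-- For `c ≤ 0` and `x₀ < y₀`, there is no function `ζ`, C¹ on `[x₀, y₀]` and
C⁴ on `(x₀, y₀)`, with `ζ⁗ + c·ζ″ = 0` on `(x₀, y₀)`, `ζ > 0` on `(x₀, y₀)`, and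
`ζ = ζ' = 0` at both endpoints. -/
theorem stmt_18 (c x₀ y₀ : ℝ) (hc : c ≤ 0) (hxy : x₀ < y₀) :
    ¬ ∃ ζ : ℝ → ℝ,
      ContDiffOn ℝ 1 ζ (Icc x₀ y₀) ∧
      ContDiffOn ℝ 4 ζ (Ioo x₀ y₀) ∧
      (∀ x ∈ Ioo x₀ y₀, iteratedDeriv 4 ζ x + c * iteratedDeriv 2 ζ x = 0) ∧
      (∀ x ∈ Ioo x₀ y₀, 0 < ζ x) ∧
      ζ x₀ = 0 ∧ ζ y₀ = 0 ∧
      derivWithin ζ (Icc x₀ y₀) x₀ = 0 ∧ derivWithin ζ (Icc x₀ y₀) y₀ = 0 := by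
  rintro ⟨ζ, h1, h4, hode, hpos, hz0, hz1, hd0, hd1⟩
  have hsub : Ioo x₀ y₀ ⊆ Icc x₀ y₀ := Ioo_subset_Icc_self
  set ζ1 : ℝ → ℝ := derivWithin ζ (Icc x₀ y₀) with hζ1def
  have hζ1cont : ContinuousOn ζ1 (Icc x₀ y₀) :=
    h1.continuousOn_derivWithin (uniqueDiffOn_Icc hxy) le_rfl
  have hmemnhds : ∀ x ∈ Ioo x₀ y₀, Icc x₀ y₀ ∈ 𝓝 x := fun x hx =>
    mem_nhds_iff.2 ⟨Ioo x₀ y₀, hsub, isOpen_Ioo, hx⟩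
  have hζ1eq : ∀ x ∈ Ioo x₀ y₀, ζ1 x = deriv ζ x := fun x hx =>
    derivWithin_of_mem_nhds (hmemnhds x hx)
  -- derivative chain
  set w2 : ℝ → ℝ := deriv (deriv ζ) with hw2def
  set w3 : ℝ → ℝ := deriv w2 with hw3def
  set w4 : ℝ → ℝ := deriv w3 with hw4def
  have hC3 : ContDiffOn ℝ 3 (deriv ζ) (Ioo x₀ y₀) :=
    h4.deriv_of_isOpen isOpen_Ioo (by norm_num)
  have hC2 : ContDiffOn ℝ 2 w2 (Ioo x₀ y₀) :=
    hC3.deriv_of_isOpen isOpen_Ioo (by norm_num)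
  have hC1 : ContDiffOn ℝ 1 w3 (Ioo x₀ y₀) :=
    hC2.deriv_of_isOpen isOpen_Ioo (by norm_num)
  have hζdiff : ∀ x ∈ Ioo x₀ y₀, HasDerivAt ζ (deriv ζ x) x := fun x hx =>
    ((h4.differentiableOn (by norm_num)).differentiableAt (isOpen_Ioo.mem_nhds hx)).hasDerivAt
  have hζ'diff : ∀ x ∈ Ioo x₀ y₀, HasDerivAt (deriv ζ) (w2 x) x := fun x hx =>
    ((hC3.differentiableOn (by norm_num)).differentiableAt (isOpen_Ioo.mem_nhds hx)).hasDerivAt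
  have hw2diff : ∀ x ∈ Ioo x₀ y₀, HasDerivAt w2 (w3 x) x := fun x hx =>
    ((hC2.differentiableOn (by norm_num)).differentiableAt (isOpen_Ioo.mem_nhds hx)).hasDerivAt
  have hw3diff : ∀ x ∈ Ioo x₀ y₀, HasDerivAt w3 (w4 x) x := fun x hx =>
    ((hC1.differentiableOn (by norm_num)).differentiableAt (isOpen_Ioo.mem_nhds hx)).hasDerivAt
  have hζ1deriv : ∀ x ∈ Ioo x₀ y₀, HasDerivAt ζ1 (w2 x) x := by
    intro x hx
    refine (hζ'diff x hx).congr_of_eventuallyEq ?_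
    filter_upwards [isOpen_Ioo.mem_nhds hx] with y hy using hζ1eq y hy
  have hit2 : iteratedDeriv 2 ζ = w2 := by
    simp [hw2def, iteratedDeriv_succ, iteratedDeriv_one]
  have hit4 : iteratedDeriv 4 ζ = w4 := by
    simp [hw4def, hw3def, hw2def, iteratedDeriv_succ, iteratedDeriv_one]
  have hodew : ∀ x ∈ Ioo x₀ y₀, w4 x = -c * w2 x := by
    intro x hx
    have := hode x hx
    rw [hit2, hit4] at this
    linarith
  -- maximum of ζ
  obtain ⟨m, hmIcc, hm⟩ := isCompact_Icc.exists_isMaxOn (nonempty_Icc.2 hxy.le) h1.continuousOn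
  set M := ζ m with hMdef
  have hmid : (x₀ + y₀) / 2 ∈ Ioo x₀ y₀ := ⟨by linarith, by linarith⟩
  have hMpos : 0 < M := lt_of_lt_of_le (hpos _ hmid) (hm (hsub hmid))
  set A := {x | x ∈ Icc x₀ y₀ ∧ ζ x = M} with hAdef
  have hAne : A.Nonempty := ⟨m, hmIcc, rfl⟩
  have hAclosed : IsClosed A := by
    have : A = Icc x₀ y₀ ∩ ζ ⁻¹' {M} := by ext x; simp [hAdef]
    rw [this]
    exact h1.continuousOn.preimage_isClosed_of_isClosed isClosed_Icc isClosed_singleton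
  have hAbdd : BddBelow A := ⟨x₀, fun x hx => hx.1.1⟩
  set s := sInf A with hsdef
  have hsA : s ∈ A := hAclosed.csInf_mem hAne hAbdd
  have hsIoo : s ∈ Ioo x₀ y₀ := by
    rcases hsA with ⟨⟨hs1, hs2⟩, hsM⟩
    constructor
    · rcases hs1.lt_or_eq with h | h
      · exact h
      · exfalso; rw [← h, hz0] at hsM; linarith
    · rcases hs2.lt_or_eq with h | h
      · exact h
      · exfalso; rw [h, hz1] at hsM; linarith
  -- ζ1 s = 0
  have hζ1s : ζ1 s = 0 := by
    rw [hζ1eq s hsIoo]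
    have hmax : IsLocalMax ζ s := by
      filter_upwards [hmemnhds s hsIoo] with y hy
      calc ζ y ≤ ζ m := hm hy
        _ = ζ s := hsA.2.symm
    exact hmax.deriv_eq_zero
  -- Rolle on [x₀, s] and [s, y₀]
  obtain ⟨p, hpI, hw2p⟩ : ∃ p ∈ Ioo x₀ s, w2 p = 0 := by
    refine exists_hasDerivAt_eq_zero hsIoo.1
      (hζ1cont.mono (Icc_subset_Icc le_rfl hsIoo.2.le)) (by rw [hd0, hζ1s]) ?_
    intro x hx
    exact hζ1deriv x ⟨hx.1, hx.2.trans hsIoo.2⟩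
  obtain ⟨q, hqI, hw2q⟩ : ∃ q ∈ Ioo s y₀, w2 q = 0 := by
    refine exists_hasDerivAt_eq_zero hsIoo.2
      (hζ1cont.mono (Icc_subset_Icc hsIoo.1.le le_rfl)) (by rw [hd1, hζ1s]) ?_
    intro x hx
    exact hζ1deriv x ⟨hsIoo.1.trans hx.1, hx.2⟩
  have hpq : p < q := hpI.2.trans hqI.1
  have hpqsub : Icc p q ⊆ Ioo x₀ y₀ := fun x hx =>
    ⟨hpI.1.trans_le hx.1, hx.2.trans_lt hqI.2⟩
  have hpqsub' : Ioo p q ⊆ Ioo x₀ y₀ := fun x hx => hpqsub ⟨hx.1.le, hx.2.le⟩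
  -- h := w2², convex on [p,q], zero at endpoints
  set h : ℝ → ℝ := fun x => (w2 x) ^ 2 with hhdef
  have hconv : ConvexOn ℝ (Icc p q) h := by
    have hint : interior (Icc p q) = Ioo p q := interior_Icc
    refine convexOn_of_hasDerivWithinAt2_nonneg (convex_Icc p q)
      (f' := fun x => 2 * w2 x * w3 x)
      (f'' := fun x => 2 * w3 x * w3 x + 2 * w2 x * w4 x) ?_ ?_ ?_ ?_
    · exact ((hC2.continuousOn).mono hpqsub).pow 2
    · rw [hint]
      intro x hx
      have := ((hw2diff x (hpqsub' hx)).pow 2).hasDerivWithinAt (s := Ioo p q)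
      exact this.congr_deriv (by push_cast; ring)
    · rw [hint]
      intro x hx
      have h2 := hw2diff x (hpqsub' hx)
      have h3 := hw3diff x (hpqsub' hx)
      exact ((h2.const_mul 2).mul h3).hasDerivWithinAt
    · rw [hint]
      intro x hx
      have hode' := hodew x (hpqsub' hx)
      show 0 ≤ 2 * w3 x * w3 x + 2 * w2 x * w4 x
      rw [hode']
      nlinarith [sq_nonneg (w3 x), sq_nonneg (w2 x), mul_nonneg (neg_nonneg.2 hc) (sq_nonneg (w2 x))]
  have hh0 : ∀ x ∈ Icc p q, w2 x = 0 := by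
    intro x hx
    have hle : h x ≤ max (h p) (h q) := by
      have hseg : x ∈ segment ℝ p q := by rwa [segment_eq_Icc hpq.le]
      exact hconv.le_on_segment (left_mem_Icc.2 hpq.le) (right_mem_Icc.2 hpq.le) hseg
    have : h x ≤ 0 := by
      simpa [hhdef, hw2p, hw2q] using hle
    have := le_antisymm this (sq_nonneg _)
    exact pow_eq_zero_iff (two_ne_zero).symm.symm |>.1 this
  -- ζ1 is constant (= 0) on [p,q]
  have hζ1const : ∀ x ∈ Icc p q, ζ1 x = ζ1 p := by
    apply constant_of_has_deriv_right_zero (hζ1cont.mono (fun x hx => hsub (hpqsub hx)))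
    intro x hx
    have hxI : x ∈ Ioo x₀ y₀ := hpqsub ⟨hx.1, hx.2.le⟩
    have := hζ1deriv x hxI
    rw [hh0 x ⟨hx.1, hx.2.le⟩] at this
    exact this.hasDerivWithinAt
  have hsmem : s ∈ Icc p q := ⟨hpI.2.le, hqI.1.le⟩
  have hζ1p : ζ1 p = 0 := by
    have := hζ1const s hsmem
    rw [hζ1s] at this
    linarith
  -- ζ is constant on [p,q]
  have hζconst : ∀ x ∈ Icc p q, ζ x = ζ p := by
    apply constant_of_has_deriv_right_zero (h1.continuousOn.mono (fun x hx => hsub (hpqsub hx)))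
    intro x hx
    have hxI : x ∈ Ioo x₀ y₀ := hpqsub ⟨hx.1, hx.2.le⟩
    have hd := hζdiff x hxI
    have : deriv ζ x = 0 := by
      rw [← hζ1eq x hxI, hζ1const x ⟨hx.1, hx.2.le⟩, hζ1p]
    rw [this] at hd
    exact hd.hasDerivWithinAt
  have hζpM : ζ p = M := by
    have := hζconst s hsmem
    rw [hsA.2] at this
    exact this.symm
  have hpA : p ∈ A := ⟨hsub (hpqsub (left_mem_Icc.2 hpq.le)), hζpM⟩
  have : s ≤ p := csInf_le hAbdd hpA
  exact absurd hpI.2 (not_lt.2 this)
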